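/- arXiv:math/0110205 — 2 statements merged into one kernel-verified Lean document; each statement's English description precedes it below -/
import Mathlib

section
/- Let P be a bounded Voronoi cell in a packing of unit balls in ℝ^d. Then for every face F of P of dimension d−i, where 1 ≤ i ≤ d, one has √(2i/(i+1)) ≤ R(F). -/
open MeasureTheory Metric

noncomputable section

/-- The Voronoi cell of the unit ball centered at the origin, with respect to the set `C`
of centers of a unit ball packing. -/
def VoronoiCell {d : ℕ} (C : Set (EuclideanSpace ℝ (Fin d))) :
    Set (EuclideanSpace ℝ (Fin d)) :=
  {x | ∀ c ∈ C, ‖x‖ ≤ ‖x - c‖}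

/-- `C` is the set of centers of a packing of unit balls, one of which is centered at the
origin. -/
def IsUnitBallPacking {d : ℕ} (C : Set (EuclideanSpace ℝ (Fin d))) : Prop :=
  (0 : EuclideanSpace ℝ (Fin d)) ∈ C ∧ ∀ c ∈ C, ∀ c' ∈ C, c ≠ c' → 2 ≤ ‖c - c'‖

/-- `F` is a (nonempty, exposed) face of `P` of dimension `k`. -/
def IsFaceDim {d : ℕ} (P F : Set (EuclideanSpace ℝ (Fin d))) (k : ℕ) : Prop :=
  IsExposed ℝ P F ∧ F.Nonempty ∧ Module.finrank ℝ (affineSpan ℝ F).direction = k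

/-- `R(F)`: the distance from the origin to the affine hull of `F`. -/
def faceDist {d : ℕ} (F : Set (EuclideanSpace ℝ (Fin d))) : ℝ :=
  Metric.infDist 0 (affineSpan ℝ F : Set (EuclideanSpace ℝ (Fin d)))

namespace RogersAux

variable {d : ℕ}

local notation "E" d => EuclideanSpace ℝ (Fin d)

/-- Squared-norm characterization of the Voronoi inequality. -/
lemma norm_le_iff (x c : E d) : ‖x‖ ≤ ‖x - c‖ ↔ 2 * (inner ℝ x c : ℝ) ≤ ‖c‖ ^ 2 := by
  have h2 : ‖x - c‖ ^ 2 = ‖x‖ ^ 2 - 2 * (inner ℝ x c : ℝ) + ‖c‖ ^ 2 := norm_sub_sq_real x c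
  constructor
  · intro h
    nlinarith [norm_nonneg x, norm_nonneg (x - c)]
  · intro h
    nlinarith [norm_nonneg x, norm_nonneg (x - c)]

lemma norm_eq_iff (x c : E d) : ‖x - c‖ = ‖x‖ ↔ 2 * (inner ℝ x c : ℝ) = ‖c‖ ^ 2 := by
  have h2 : ‖x - c‖ ^ 2 = ‖x‖ ^ 2 - 2 * (inner ℝ x c : ℝ) + ‖c‖ ^ 2 := norm_sub_sq_real x c
  constructor
  · intro h
    rw [h] at h2; linarith
  · intro h
    have : ‖x - c‖ ^ 2 = ‖x‖ ^ 2 := by linarith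
    nlinarith [norm_nonneg x, norm_nonneg (x - c)]

lemma voronoi_convex (C : Set (E d)) : Convex ℝ (VoronoiCell C) := by
  have : VoronoiCell C = ⋂ c ∈ C, {x : E d | (inner ℝ x c : ℝ) ≤ ‖c‖ ^ 2 / 2} := by
    ext x
    simp only [VoronoiCell, Set.mem_setOf_eq, Set.mem_iInter]
    refine forall₂_congr fun c _ => ?_
    rw [norm_le_iff]
    constructor <;> intro h <;> linarith
  rw [this]
  refine convex_iInter₂ fun c _ => convex_halfSpace_le ⟨?_, ?_⟩ _
  · intro a b; exact inner_add_left a b c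
  · intro r a; exact real_inner_smul_left a c r

lemma separated_finite (C : Set (E d))
    (hsep : ∀ c ∈ C, ∀ c' ∈ C, c ≠ c' → 2 ≤ ‖c - c'‖) (M : ℝ) :
    {c ∈ C | ‖c‖ ≤ M}.Finite := by
  by_contra hinf
  replace hinf : {c ∈ C | ‖c‖ ≤ M}.Infinite := hinf
  obtain ⟨x, -, hx⟩ := hinf.exists_accPt_of_subset_isCompact
    (isCompact_closedBall (0 : E d) M)
    (fun c hc => by simpa [mem_closedBall, dist_zero_right] using hc.2)
  rw [accPt_iff_nhds] at hx
  obtain ⟨a, ⟨haB, haC⟩, hax⟩ := hx (ball x 1) (ball_mem_nhds x one_pos)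
  obtain ⟨b, ⟨hbB, hbC⟩, hbx⟩ := hx (ball x (min 1 (dist a x)))
    (ball_mem_nhds x (lt_min one_pos (dist_pos.2 hax)))
  have hab : a ≠ b := by
    intro h; subst h
    exact absurd (mem_ball.1 hbB) (not_lt.2 (min_le_right _ _))
  have h1 : dist a x < 1 := mem_ball.1 haB
  have h2 : dist b x < 1 := (mem_ball.1 hbB).trans_le (min_le_left _ _)
  have h3 : ‖a - b‖ = dist a b := (dist_eq_norm a b).symm
  have h4 := dist_triangle a x b
  rw [dist_comm x b] at h4
  linarith [hsep a haC.1 b hbC.1 hab]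

open Finset in
open scoped Classical in
lemma circum (i : ℕ) (T : Finset (E d))
    (hcard : T.card = i + 1)
    (hsep : ∀ c ∈ T, ∀ c' ∈ T, c ≠ c' → 2 ≤ ‖c - c'‖)
    (q : E d) (heq : ∀ c ∈ T, ‖c - q‖ = ‖q‖) :
    2 * i / (i + 1) ≤ ‖q‖ ^ 2 := by
  set r := ‖q‖ with hr
  have key : ∀ c ∈ T, ∀ c' ∈ T, c ≠ c' →
      (inner ℝ (c - q) (c' - q) : ℝ) ≤ r ^ 2 - 2 := by
    intro c hc c' hc' hne
    have h1 : ‖(c - q) - (c' - q)‖ = ‖c - c'‖ := by rw [sub_sub_sub_cancel_right]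
    have h2 : ‖(c - q) - (c' - q)‖ ^ 2 = ‖c - q‖ ^ 2 - 2 * inner ℝ (c - q) (c' - q) + ‖c' - q‖ ^ 2 :=
      norm_sub_sq_real _ _
    have h3 := hsep c hc c' hc' hne
    have h4 : (2:ℝ) ^ 2 ≤ ‖c - c'‖ ^ 2 := by nlinarith
    rw [h1, heq c hc, heq c' hc'] at h2
    nlinarith
  have hnn : (0:ℝ) ≤ ‖∑ c ∈ T, (c - q)‖ ^ 2 := sq_nonneg _
  have hexp : ‖∑ c ∈ T, (c - q)‖ ^ 2 = ∑ c ∈ T, ∑ c' ∈ T, (inner ℝ (c - q) (c' - q) : ℝ) := by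
    rw [← real_inner_self_eq_norm_sq, sum_inner]
    exact Finset.sum_congr rfl fun c _ => inner_sum _ _ _
  have hbound : ∀ c ∈ T, ∑ c' ∈ T, (inner ℝ (c - q) (c' - q) : ℝ)
      ≤ r ^ 2 + i * (r ^ 2 - 2) := by
    intro c hc
    rw [← Finset.add_sum_erase _ _ hc]
    have hle : ∑ c' ∈ T.erase c, (inner ℝ (c - q) (c' - q) : ℝ) ≤ (T.erase c).card • (r ^ 2 - 2) := by
      apply Finset.sum_le_card_nsmul
      intro c' hc'
      exact key c hc c' (Finset.mem_of_mem_erase hc') (Finset.ne_of_mem_erase hc').symm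
    rw [Finset.card_erase_of_mem hc, hcard] at hle
    have hself : (inner ℝ (c - q) (c - q) : ℝ) = r ^ 2 := by
      rw [real_inner_self_eq_norm_sq, heq c hc]
    simp only [Nat.add_sub_cancel, nsmul_eq_mul] at hle
    rw [hself]; linarith
  have htot : (0:ℝ) ≤ (i + 1) * (r ^ 2 + i * (r ^ 2 - 2)) := by
    rw [hexp] at hnn
    calc (0:ℝ) ≤ ∑ c ∈ T, ∑ c' ∈ T, (inner ℝ (c - q) (c' - q) : ℝ) := hnn
    _ ≤ ∑ _c ∈ T, (r ^ 2 + i * (r ^ 2 - 2)) := Finset.sum_le_sum hbound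
    _ = (i + 1) * (r ^ 2 + i * (r ^ 2 - 2)) := by
        rw [Finset.sum_const, hcard]; push_cast; ring
  have hipos : (0:ℝ) < i + 1 := by positivity
  rw [div_le_iff₀ hipos]
  nlinarith

lemma intrin {F : Set (E d)} {x : E d}
    (hx : x ∈ intrinsicInterior ℝ F) :
    x ∈ F ∧ ∃ ε > 0, ∀ y ∈ affineSpan ℝ F, dist y x < ε → y ∈ F := by
  refine ⟨intrinsicInterior_subset hx, ?_⟩
  obtain ⟨z, hz, rfl⟩ := hx
  rw [mem_interior_iff_mem_nhds, Metric.mem_nhds_iff] at hz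
  obtain ⟨ε, hε, hball⟩ := hz
  refine ⟨ε, hε, fun y hy hdy => ?_⟩
  have : (⟨y, hy⟩ : affineSpan ℝ F) ∈ ball z ε := by
    rw [mem_ball, Subtype.dist_eq]; exact hdy
  exact hball this

end RogersAux

open RogersAux in
/-- **Corollary 1 (Rogers).** For every face `F` of dimension `d - i` (`1 ≤ i ≤ d`) of a
bounded Voronoi cell `P` in a unit ball packing of `ℝ^d`, one has `√(2i/(i+1)) ≤ R(F)`. -/
theorem faceDist_ge_sqrt (d i : ℕ) (hi : 1 ≤ i) (hid : i ≤ d)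
    (C : Set (EuclideanSpace ℝ (Fin d))) (hC : IsUnitBallPacking C)
    (hBdd : Bornology.IsBounded (VoronoiCell C))
    (F : Set (EuclideanSpace ℝ (Fin d)))
    (hF : IsFaceDim (VoronoiCell C) F (d - i)) :
    Real.sqrt (2 * i / (i + 1)) ≤ faceDist F := by
  classical
  obtain ⟨h0C, hsep⟩ := hC
  obtain ⟨hexp, hne, hdim⟩ := hF
  set P := VoronoiCell C with hP
  have hPconv : Convex ℝ P := voronoi_convex C
  have hFP : F ⊆ P := hexp.subset
  have hFconv : Convex ℝ F := hexp.convex hPconv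
  -- a point in the intrinsic interior of F
  obtain ⟨x, hxint⟩ := hne.intrinsicInterior hFconv
  obtain ⟨hxF, ε, hε, hloc⟩ := intrin hxint
  have hxP : x ∈ P := hFP hxF
  -- the active centers
  set S : Set (EuclideanSpace ℝ (Fin d)) := {c | c ∈ C ∧ c ≠ 0 ∧ ‖x - c‖ = ‖x‖} with hS
  -- Step A : every point of the affine span of F is equidistant from 0 and any c ∈ S
  have stepA : ∀ c ∈ S, ∀ y ∈ affineSpan ℝ F, ‖y - c‖ = ‖y‖ := by
    rintro c ⟨hcC, hc0, hcx⟩ y hy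
    have hxc : 2 * (inner ℝ x c : ℝ) = ‖c‖ ^ 2 := (norm_eq_iff x c).1 hcx
    -- first, the statement for y ∈ F
    have hFeq : ∀ y ∈ F, 2 * (inner ℝ y c : ℝ) = ‖c‖ ^ 2 := by
      intro y hyF
      set t : ℝ := ε / (2 * (‖x - y‖ + 1)) with htdef
      have ht : 0 < t := by positivity
      set z : EuclideanSpace ℝ (Fin d) := t • (x - y) + x with hzdef
      have hzspan : z ∈ affineSpan ℝ F := by
        have := AffineSubspace.smul_vsub_vadd_mem (affineSpan ℝ F) t
          (subset_affineSpan ℝ F hxF) (subset_affineSpan ℝ F hyF)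
          (subset_affineSpan ℝ F hxF)
        simpa [vsub_eq_sub, vadd_eq_add] using this
      have hzF : z ∈ F := by
        apply hloc z hzspan
        have : dist z x = t * ‖x - y‖ := by
          rw [dist_eq_norm]
          simp only [hzdef, add_sub_cancel_right, norm_smul, Real.norm_eq_abs,
            abs_of_pos ht]
        rw [this, htdef]
        rw [div_mul_eq_mul_div, div_lt_iff₀ (by positivity)]
        nlinarith [norm_nonneg (x - y)]
      have hzP : 2 * (inner ℝ z c : ℝ) ≤ ‖c‖ ^ 2 := (norm_le_iff z c).1 (hFP hzF c hcC)
      have hyP : 2 * (inner ℝ y c : ℝ) ≤ ‖c‖ ^ 2 := (norm_le_iff y c).1 (hFP hyF c hcC)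
      have hzin : (inner ℝ z c : ℝ) = t * ((inner ℝ x c : ℝ) - (inner ℝ y c : ℝ)) + (inner ℝ x c : ℝ) := by
        simp only [hzdef, inner_add_left, inner_sub_left, real_inner_smul_left]
      rw [hzin] at hzP
      nlinarith
    -- extend to the affine span by induction
    have hind : 2 * (inner ℝ y c : ℝ) = ‖c‖ ^ 2 := by
      refine affineSpan_induction (p := fun y => 2 * (inner ℝ y c : ℝ) = ‖c‖ ^ 2) hy hFeq ?_
      intro r u v w hu hv hw
      have : (inner ℝ (r • (u - v) + w) c : ℝ)
          = r * ((inner ℝ u c : ℝ) - (inner ℝ v c : ℝ)) + (inner ℝ w c : ℝ) := by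
        simp only [inner_add_left, inner_sub_left, real_inner_smul_left]
      simp only [vsub_eq_sub, vadd_eq_add]
      have hAB : (inner ℝ u c : ℝ) = inner ℝ v c := by linarith
      rw [this, hAB]
      simp only [sub_self, mul_zero, zero_add]
      exact hw
    exact (norm_eq_iff y c).2 hind
  -- Step B : S is finite
  have hSfin : S.Finite := by
    apply (separated_finite C hsep (2 * ‖x‖)).subset
    rintro c ⟨hcC, -, hceq⟩
    refine ⟨hcC, ?_⟩
    have h5 : ‖x - (x - c)‖ ≤ ‖x‖ + ‖x - c‖ := norm_sub_le x (x - c)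
    rw [sub_sub_cancel] at h5
    linarith
  -- Step C : the orthogonal complement of span S is contained in the direction of aff F
  have stepC : (Submodule.span ℝ S)ᗮ ≤ (affineSpan ℝ F).direction := by
    -- the finite set of nearby inactive centers and the margin δ
    have hN'fin : {c | c ∈ C ∧ ‖c‖ ≤ 2 * ‖x‖ + 2 ∧ c ∉ S ∧ c ≠ 0}.Finite :=
      (separated_finite C hsep (2 * ‖x‖ + 2)).subset (fun c hc => ⟨hc.1, hc.2.1⟩)
    set N' := {c | c ∈ C ∧ ‖c‖ ≤ 2 * ‖x‖ + 2 ∧ c ∉ S ∧ c ≠ 0} with hN'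
    set D : Finset ℝ := hN'fin.toFinset.image (fun c => ‖x - c‖ - ‖x‖) with hD
    set δ : ℝ := if hDne : D.Nonempty then D.min' hDne else 1 with hδ
    have hmargin : ∀ c ∈ N', 0 < ‖x - c‖ - ‖x‖ := by
      rintro c ⟨hcC, -, hcS, hc0⟩
      have hle : ‖x‖ ≤ ‖x - c‖ := hxP c hcC
      rcases lt_or_eq_of_le hle with h | h
      · linarith
      · exact absurd ⟨hcC, hc0, h.symm⟩ hcS
    have hδpos : 0 < δ := by
      rw [hδ]
      split_ifs with hDne
      · obtain ⟨c, hc, hcmin⟩ := Finset.mem_image.1 (D.min'_mem hDne)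
        rw [← hcmin]
        exact hmargin c (hN'fin.mem_toFinset.1 hc)
      · exact one_pos
    have hδle : ∀ c ∈ N', δ ≤ ‖x - c‖ - ‖x‖ := by
      intro c hc
      have hmem : ‖x - c‖ - ‖x‖ ∈ D :=
        Finset.mem_image.2 ⟨c, hN'fin.mem_toFinset.2 hc, rfl⟩
      rw [hδ]
      split_ifs with hDne
      · exact D.min'_le _ hmem
      · exact absurd ⟨_, hmem⟩ hDne
    -- membership in P for small orthogonal perturbations
    have hmem : ∀ w : EuclideanSpace ℝ (Fin d), ‖w‖ ≤ 1 → 2 * ‖w‖ ≤ δ →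
        (∀ c ∈ S, (inner ℝ w c : ℝ) = 0) → x + w ∈ P := by
      intro w hw1 hw2 hworth c hcC
      by_cases hc0 : c = 0
      · subst hc0; simp
      by_cases hcS : c ∈ S
      · rw [norm_le_iff]
        have h1 : 2 * (inner ℝ x c : ℝ) = ‖c‖ ^ 2 := (norm_eq_iff x c).1 hcS.2.2
        have h2 : (inner ℝ (x + w) c : ℝ) = (inner ℝ x c : ℝ) + (inner ℝ w c : ℝ) :=
          inner_add_left x w c
        rw [h2, hworth c hcS]
        linarith
      by_cases hcfar : 2 * ‖x‖ + 2 < ‖c‖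
      · have ha : ‖x + w‖ ≤ ‖x‖ + ‖w‖ := norm_add_le x w
        have hb : ‖c‖ = ‖(x + w) - (x + w - c)‖ := by rw [sub_sub_cancel]
        have hb' : ‖(x + w) - (x + w - c)‖ ≤ ‖x + w‖ + ‖x + w - c‖ := norm_sub_le _ _
        linarith
      · have hcN' : c ∈ N' := ⟨hcC, le_of_not_gt hcfar, hcS, hc0⟩
        have h5 := hδle c hcN'
        have h6 : ‖x - c‖ = ‖(x + w - c) - w‖ := by
          congr 1
          abel
        have h7 : ‖(x + w - c) - w‖ ≤ ‖x + w - c‖ + ‖w‖ := norm_sub_le _ _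
        have h8 : ‖x + w‖ ≤ ‖x‖ + ‖w‖ := norm_add_le x w
        linarith
    -- now the main argument
    intro v hv
    rcases eq_or_ne v 0 with rfl | hv0
    · exact Submodule.zero_mem _
    have hvnorm : 0 < ‖v‖ := norm_pos_iff.2 hv0
    set t : ℝ := min 1 δ / (2 * (‖v‖ + 1)) with htdef
    have hmin : 0 < min 1 δ := lt_min one_pos hδpos
    have ht : 0 < t := by positivity
    have htv : ‖t • v‖ = t * ‖v‖ := by
      rw [norm_smul, Real.norm_eq_abs, abs_of_pos ht]
    have htv2 : 2 * ‖t • v‖ ≤ min 1 δ := by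
      rw [htv, htdef, div_mul_eq_mul_div, ← mul_div_assoc, div_le_iff₀ (by positivity)]
      nlinarith [min_le_left (1:ℝ) δ, min_le_right (1:ℝ) δ]
    have htv1 : ‖t • v‖ ≤ 1 := by
      have := min_le_left (1:ℝ) δ
      have hnn : 0 ≤ ‖t • v‖ := norm_nonneg _
      linarith
    have htvδ : 2 * ‖t • v‖ ≤ δ := htv2.trans (min_le_right _ _)
    have horth : ∀ c ∈ S, (inner ℝ (t • v) c : ℝ) = 0 := by
      intro c hcS
      have h1 : (inner ℝ c v : ℝ) = 0 :=
        hv c (Submodule.subset_span hcS)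
      rw [real_inner_smul_left, real_inner_comm, h1, mul_zero]
    have horth' : ∀ c ∈ S, (inner ℝ (-(t • v)) c : ℝ) = 0 := by
      intro c hcS
      rw [inner_neg_left, horth c hcS, neg_zero]
    have hp1 : x + t • v ∈ P := hmem (t • v) htv1 htvδ horth
    have hp2 : x + -(t • v) ∈ P := by
      refine hmem (-(t • v)) ?_ ?_ horth'
      · rwa [norm_neg]
      · rwa [norm_neg]
    -- exposedness forces both perturbed points into F
    obtain ⟨l, hl⟩ := hexp hne
    have hxFl : x ∈ {z ∈ P | ∀ y ∈ P, l y ≤ l z} := hl ▸ hxF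
    have hle1 : l (x + t • v) ≤ l x := hxFl.2 _ hp1
    have hle2 : l (x + -(t • v)) ≤ l x := hxFl.2 _ hp2
    have hsum : l (x + t • v) + l (x + -(t • v)) = 2 * l x := by
      rw [map_add, map_add, map_neg]
      ring
    have heq1 : l (x + t • v) = l x := by linarith
    have hmemF : x + t • v ∈ F := by
      rw [hl]
      refine ⟨hp1, fun y hy => ?_⟩
      rw [heq1]
      exact hxFl.2 y hy
    have hdir : t • v ∈ (affineSpan ℝ F).direction := by
      have := AffineSubspace.vsub_mem_direction
        (subset_affineSpan ℝ F hmemF) (subset_affineSpan ℝ F hxF)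
      simpa [vsub_eq_sub] using this
    have : v = t⁻¹ • (t • v) := by
      rw [smul_smul, inv_mul_cancel₀ (ne_of_gt ht), one_smul]
    rw [this]
    exact Submodule.smul_mem _ _ hdir
  haveI : Fintype S := hSfin.fintype
  -- Step D : S has at least i elements
  have hScard : i ≤ S.toFinset.card := by
    have h1 : Module.finrank ℝ (Submodule.span ℝ S)ᗮ ≤ d - i := by
      rw [← hdim]
      exact Submodule.finrank_mono stepC |>.trans (le_of_eq rfl)
    have h2 : Module.finrank ℝ (Submodule.span ℝ S) +
        Module.finrank ℝ (Submodule.span ℝ S)ᗮ = d := by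
      rw [Submodule.finrank_add_finrank_orthogonal]
      simp [finrank_euclideanSpace]
    have h3 : Module.finrank ℝ (Submodule.span ℝ S) ≤ S.toFinset.card :=
      finrank_span_le_card S
    omega
  -- pick i elements of S
  obtain ⟨T, hTsub, hTcard⟩ := Finset.exists_subset_card_eq hScard
  have hTS : ∀ c ∈ T, c ∈ S := fun c hc => Set.mem_toFinset.1 (hTsub hc)
  -- Step E : the circumradius bound for every point of the affine span
  have stepE : ∀ q ∈ affineSpan ℝ F, 2 * i / (i + 1) ≤ ‖q‖ ^ 2 := by
    intro q hq
    have h0T : (0 : EuclideanSpace ℝ (Fin d)) ∉ T := fun h0 => (hTS 0 h0).2.1 rfl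
    apply circum i (insert 0 T)
    · rw [Finset.card_insert_of_notMem h0T, hTcard]
    · intro c hc c' hc' hne
      have hcC : c ∈ C := by
        rcases Finset.mem_insert.1 hc with h | h
        · exact h ▸ h0C
        · exact (hTS c h).1
      have hc'C : c' ∈ C := by
        rcases Finset.mem_insert.1 hc' with h | h
        · exact h ▸ h0C
        · exact (hTS c' h).1
      exact hsep c hcC c' hc'C hne
    · intro c hc
      rcases Finset.mem_insert.1 hc with h | h
      · subst h; simp
      · rw [← norm_sub_rev]
        exact stepA c (hTS c h) q hq
  -- conclude
  have hspanne : (affineSpan ℝ F : Set (EuclideanSpace ℝ (Fin d))).Nonempty :=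
    ⟨x, subset_affineSpan ℝ F hxF⟩
  have key : ∀ q ∈ (affineSpan ℝ F : Set (EuclideanSpace ℝ (Fin d))),
      Real.sqrt (2 * i / (i + 1)) ≤ dist (0 : EuclideanSpace ℝ (Fin d)) q := by
    intro q hq
    rw [dist_zero_left]
    calc Real.sqrt (2 * i / (i + 1)) ≤ Real.sqrt (‖q‖ ^ 2) :=
          Real.sqrt_le_sqrt (stepE q hq)
    _ = ‖q‖ := Real.sqrt_sq (norm_nonneg q)
  unfold faceDist
  haveI : Nonempty (affineSpan ℝ F : Set (EuclideanSpace ℝ (Fin d))) := hspanne.to_subtype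
  rw [Metric.infDist_eq_iInf]
  exact le_ciInf fun q => key q q.2
end
end

section
/- Let P be a bounded Voronoi cell in a packing of unit balls in ℝ^d and let F_{d−i} ⊂ F_{d−i+1} ⊂ … ⊂ F_{d−1} be a subflag of faces of P (dim F_j = j) with R(F_{d−i}) < √2, where 1 ≤ i ≤ d. Then r_1, …, r_i are linearly independent, conv{o, r_1, …, r_i} is an i-dimensional orthoscheme, and for each 1 ≤ j ≤ i the point r_j lies in the relative interior of F_{d−j} and is the orthogonal projection of o onto the affine hull of F_{d−j}. -/
open MeasureTheory Metric

noncomputable section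

namespace RSO

variable {V : Type*} [NormedAddCommGroup V] [InnerProductSpace ℝ V]

/-- The key separation lemma: there is no affine relation among vectors that all have
positive inner product with `u` and pairwise nonpositive inner products. -/
lemma sep_lemma (S : Finset V) (w : V → ℝ) (v : V → V) (u : V)
    (hw : ∑ s ∈ S, w s = 1) (hv : ∑ s ∈ S, w s • v s = 0)
    (hu : ∀ s ∈ S, 0 < (inner ℝ u (v s) : ℝ))
    (hneg : ∀ s ∈ S, ∀ t ∈ S, s ≠ t → (inner ℝ (v s) (v t) : ℝ) ≤ 0) : False := by
  classical
  set Pos := S.filter (fun s => 0 < w s) with hPos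
  set Neg := S.filter (fun s => ¬ 0 < w s) with hNeg
  have hsplit : Pos ∪ Neg = S := Finset.filter_union_filter_not_eq _ S
  have hdisj : Disjoint Pos Neg := Finset.disjoint_filter_filter_not S S _
  set W : V := ∑ s ∈ Pos, w s • v s with hW
  have hPosne : Pos.Nonempty := by
    by_contra h
    rw [Finset.not_nonempty_iff_eq_empty] at h
    have : ∑ s ∈ S, w s ≤ 0 := by
      apply Finset.sum_nonpos
      intro s hs
      by_contra hpos
      have : s ∈ Pos := Finset.mem_filter.2 ⟨hs, by linarith [lt_of_not_ge hpos]⟩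
      simp [h] at this
    linarith
  have hW2 : W = ∑ s ∈ Neg, (-(w s)) • v s := by
    have : ∑ s ∈ Pos, w s • v s + ∑ s ∈ Neg, w s • v s = 0 := by
      rw [← Finset.sum_union hdisj, hsplit, hv]
    have h2 : ∑ s ∈ Neg, (-(w s)) • v s = - ∑ s ∈ Neg, w s • v s := by
      rw [← Finset.sum_neg_distrib]
      exact Finset.sum_congr rfl fun s _ => by rw [neg_smul]
    rw [h2]
    linear_combination (norm := abel) this
  have huW : 0 < (inner ℝ u W : ℝ) := by
    rw [hW, inner_sum]
    apply Finset.sum_pos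
    · intro s hs
      rw [real_inner_smul_right]
      have hs' := Finset.mem_filter.1 hs
      exact mul_pos hs'.2 (hu s hs'.1)
    · exact hPosne
  have hWW : (inner ℝ W W : ℝ) ≤ 0 := by
    nth_rewrite 1 [hW]
    rw [hW2, inner_sum]
    apply Finset.sum_nonpos
    intro t ht
    rw [real_inner_smul_right, sum_inner]
    have ht' := Finset.mem_filter.1 ht
    have hwt : 0 ≤ -(w t) := by simpa using le_of_not_gt ht'.2
    apply mul_nonpos_of_nonneg_of_nonpos hwt
    apply Finset.sum_nonpos
    intro s hs
    rw [real_inner_smul_left]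
    have hs' := Finset.mem_filter.1 hs
    have hst : s ≠ t := by
      intro h; rw [h] at hs'; exact ht'.2 hs'.2
    exact mul_nonpos_of_nonneg_of_nonpos (le_of_lt hs'.2) (hneg s hs'.1 t ht'.1 hst)
  have : W = 0 := by
    have := real_inner_self_nonneg (x := W)
    have h0 : (inner ℝ W W : ℝ) = 0 := le_antisymm hWW this
    exact inner_self_eq_zero.1 h0
  rw [this] at huW
  simp at huW


/-- Membership in the intrinsic interior, metrically. -/
lemma mem_intrinsicInterior_iff {Q : Type*} [NormedAddCommGroup Q] [NormedSpace ℝ Q]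
    {s : Set Q} {x : Q} :
    x ∈ intrinsicInterior ℝ s ↔ x ∈ affineSpan ℝ s ∧
      ∃ ε > 0, ∀ y ∈ (affineSpan ℝ s : Set Q), dist y x < ε → y ∈ s := by
  constructor
  · rintro ⟨y, hy, rfl⟩
    refine ⟨y.2, ?_⟩
    rw [mem_interior_iff_mem_nhds, Metric.mem_nhds_iff] at hy
    obtain ⟨ε, hε, hb⟩ := hy
    refine ⟨ε, hε, fun z hz hdz => ?_⟩
    have : (⟨z, hz⟩ : affineSpan ℝ s) ∈ Metric.ball y ε := by
      rw [Metric.mem_ball, Subtype.dist_eq]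
      exact hdz
    exact hb this
  · rintro ⟨hx, ε, hε, h⟩
    refine ⟨⟨x, hx⟩, ?_, rfl⟩
    rw [mem_interior_iff_mem_nhds, Metric.mem_nhds_iff]
    refine ⟨ε, hε, fun z hz => ?_⟩
    rw [Metric.mem_ball, Subtype.dist_eq] at hz
    exact h z z.2 hz

/-- A continuous linear functional that is constant on `s` is constant on its affine span. -/
lemma const_on_affineSpan {Q : Type*} [NormedAddCommGroup Q] [NormedSpace ℝ Q]
    (f : Q →L[ℝ] ℝ) {s : Set Q} {a : ℝ} (h : ∀ x ∈ s, f x = a) :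
    ∀ x ∈ affineSpan ℝ s, f x = a := by
  intro x hx
  refine affineSpan_induction (p := fun x => f x = a) hx h ?_
  intro c u v w hu hv hw
  have hv' : c • (u -ᵥ v) +ᵥ w = c • (u - v) + w := rfl
  rw [hv', map_add, _root_.map_smul, map_sub, hu, hv, hw]
  simp

variable {d : ℕ} {C : Set (EuclideanSpace ℝ (Fin d))}

lemma norm_le_iff_inner {x c : EuclideanSpace ℝ (Fin d)} :
    ‖x‖ ≤ ‖x - c‖ ↔ 2 * (inner ℝ x c : ℝ) ≤ ‖c‖ ^ 2 := by
  have h := norm_sub_sq_real x c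
  constructor
  · intro h1
    nlinarith [norm_nonneg x, norm_nonneg (x - c)]
  · intro h1
    nlinarith [norm_nonneg x, norm_nonneg (x - c)]

lemma mem_voronoi_iff {x : EuclideanSpace ℝ (Fin d)} :
    x ∈ VoronoiCell C ↔ ∀ c ∈ C, 2 * (inner ℝ x c : ℝ) ≤ ‖c‖ ^ 2 := by
  unfold VoronoiCell
  simp only [Set.mem_setOf_eq]
  exact forall₂_congr fun c hc => norm_le_iff_inner

lemma voronoi_convex : Convex ℝ (VoronoiCell C) := by
  intro x hx y hy a b ha hb hab
  rw [mem_voronoi_iff] at hx hy ⊢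
  intro c hc
  have hx' := hx c hc
  have hy' := hy c hc
  have : (inner ℝ (a • x + b • y) c : ℝ) = a * inner ℝ x c + b * inner ℝ y c := by
    rw [inner_add_left, real_inner_smul_left, real_inner_smul_left]
  rw [this]
  nlinarith

lemma packing_norm_ge (hC : IsUnitBallPacking C) {c : EuclideanSpace ℝ (Fin d)}
    (hc : c ∈ C) (hne : c ≠ 0) : 2 ≤ ‖c‖ := by
  have := hC.2 c hc 0 hC.1 hne
  simpa using this

/-- A packing has only finitely many centers in any closed ball. -/
lemma packing_finite_ball (hC : IsUnitBallPacking C) (R : ℝ) :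
    (C ∩ Metric.closedBall 0 R).Finite := by
  classical
  obtain ⟨t, hts, htf, hcov⟩ :=
    finite_cover_balls_of_compact (isCompact_closedBall (0 : EuclideanSpace ℝ (Fin d)) R)
      (by norm_num : (0:ℝ) < 1)
  have hsub : C ∩ Metric.closedBall 0 R ⊆ ⋃ x ∈ t, C ∩ Metric.ball x 1 := by
    intro c hc
    have := hcov hc.2
    simp only [Set.mem_iUnion] at this ⊢
    obtain ⟨x, hx, hball⟩ := this
    exact ⟨x, hx, hc.1, hball⟩
  refine Set.Finite.subset (Set.Finite.biUnion htf fun x _ => ?_) hsub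
  apply Set.Subsingleton.finite
  intro a ha b hb
  by_contra hab
  have h2 := hC.2 a ha.1 b hb.1 hab
  have da : dist a x < 1 := ha.2
  have db : dist b x < 1 := hb.2
  have : dist a b < 2 := by
    calc dist a b ≤ dist a x + dist x b := dist_triangle a x b
    _ < 2 := by rw [dist_comm x b] at *; linarith
  rw [dist_eq_norm] at this
  linarith


/-- Uniform slack: if all constraints outside `A` are strictly slack at `p`, they remain
satisfied in a neighborhood of `p`. -/
lemma slack_lemma (hC : IsUnitBallPacking C) (A : Set (EuclideanSpace ℝ (Fin d)))
    (p : EuclideanSpace ℝ (Fin d))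
    (hp : ∀ c ∈ C, c ∉ A → c ≠ 0 → 2 * (inner ℝ p c : ℝ) < ‖c‖ ^ 2) :
    ∃ ε > 0, ∀ x : EuclideanSpace ℝ (Fin d), dist x p < ε →
      ∀ c ∈ C, c ∉ A → 2 * (inner ℝ x c : ℝ) ≤ ‖c‖ ^ 2 := by
  classical
  have hfar : ∀ x : EuclideanSpace ℝ (Fin d), ‖x‖ ≤ ‖p‖ + 1 →
      ∀ c : EuclideanSpace ℝ (Fin d), 2 * ‖p‖ + 2 ≤ ‖c‖ → 2 * (inner ℝ x c : ℝ) ≤ ‖c‖ ^ 2 := by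
    intro x hx c hcbig
    have h1 : (inner ℝ x c : ℝ) ≤ ‖x‖ * ‖c‖ := real_inner_le_norm x c
    have h2 : (0:ℝ) ≤ ‖c‖ := norm_nonneg c
    nlinarith
  have hxnorm : ∀ x : EuclideanSpace ℝ (Fin d), dist x p < 1 → ‖x‖ ≤ ‖p‖ + 1 := by
    intro x hx
    have : ‖x - p‖ < 1 := by rwa [← dist_eq_norm]
    have h2 : ‖x‖ ≤ ‖x - p‖ + ‖p‖ := by
      simpa using norm_add_le (x - p) p
    linarith
  have hfin : ((C ∩ Metric.closedBall 0 (2*‖p‖+2)) \ (A ∪ {0})).Finite :=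
    (packing_finite_ball hC _).diff
  set N := hfin.toFinset with hN
  by_cases hNe : N.Nonempty
  · set f : EuclideanSpace ℝ (Fin d) → ℝ := fun c => ‖c‖^2 - 2 * (inner ℝ p c : ℝ) with hf
    set δ := N.inf' hNe f with hδdef
    have hmemN : ∀ c, c ∈ N ↔ (c ∈ C ∧ ‖c‖ ≤ 2*‖p‖+2) ∧ ¬(c ∈ A ∨ c = 0) := by
      intro c
      rw [hN, Set.Finite.mem_toFinset]
      simp only [Set.mem_diff, Set.mem_inter_iff, mem_closedBall_zero_iff, Set.mem_union,
        Set.mem_singleton_iff]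
    have hδ : 0 < δ := by
      rw [hδdef]
      rw [Finset.lt_inf'_iff]
      intro c hc
      rw [hmemN] at hc
      push_neg at hc
      have := hp c hc.1.1 hc.2.1 hc.2.2
      rw [hf]; dsimp only; linarith
    refine ⟨min 1 (δ / (4*‖p‖ + 5)), lt_min one_pos (by positivity), ?_⟩
    intro x hx c hcC hcA
    by_cases hc0 : c = 0
    · subst hc0; simp
    by_cases hbig : 2*‖p‖+2 ≤ ‖c‖
    · exact hfar x (hxnorm x (lt_of_lt_of_le hx (min_le_left _ _))) c hbig
    · have hcN : c ∈ N := by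
        rw [hmemN]
        exact ⟨⟨hcC, le_of_not_ge hbig⟩, by simp [hcA, hc0]⟩
      have hslack : δ ≤ ‖c‖^2 - 2 * (inner ℝ p c : ℝ) := Finset.inf'_le f hcN
      have habs : |(inner ℝ (x - p) c : ℝ)| ≤ ‖x - p‖ * ‖c‖ := abs_real_inner_le_norm _ _
      have hdist : ‖x - p‖ < δ / (4*‖p‖ + 5) := by
        rw [← dist_eq_norm]
        exact lt_of_lt_of_le hx (min_le_right _ _)
      have hdiff : (inner ℝ x c : ℝ) - inner ℝ p c = inner ℝ (x - p) c := by
        rw [inner_sub_left]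
      have hcb : ‖c‖ ≤ 2*‖p‖+2 := le_of_not_ge hbig
      have hpn : (0:ℝ) ≤ ‖p‖ := norm_nonneg p
      have hxpn : (0:ℝ) ≤ ‖x - p‖ := norm_nonneg _
      have hcn : (0:ℝ) ≤ ‖c‖ := norm_nonneg c
      have h1 : (inner ℝ (x-p) c : ℝ) ≤ ‖x - p‖ * ‖c‖ := le_trans (le_abs_self _) habs
      have h45 : ‖x - p‖ * (4*‖p‖+5) < δ := (lt_div_iff₀ (by positivity)).1 hdist
      nlinarith
  · refine ⟨1, one_pos, ?_⟩
    intro x hx c hcC hcA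
    by_cases hc0 : c = 0
    · subst hc0; simp
    by_cases hbig : 2*‖p‖+2 ≤ ‖c‖
    · exact hfar x (hxnorm x hx) c hbig
    · exfalso
      apply hNe
      refine ⟨c, ?_⟩
      rw [hN, Set.Finite.mem_toFinset]
      refine ⟨⟨hcC, ?_⟩, ?_⟩
      · rw [mem_closedBall_zero_iff]; exact le_of_not_ge hbig
      · simp [hcA, hc0]


set_option maxHeartbeats 1600000 in
/-- The central geometric lemma: the orthogonal projection of the origin onto the affine
hull of a face at distance `< √2` lies in the relative interior of the face. -/
lemma main_face_lemma (hC : IsUnitBallPacking C)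
    {F : Set (EuclideanSpace ℝ (Fin d))} {k : ℕ}
    (hF : IsFaceDim (VoronoiCell C) F k) (hkd : k < d)
    (hrho : faceDist F < Real.sqrt 2) :
    ∃ q : EuclideanSpace ℝ (Fin d), q ∈ intrinsicInterior ℝ F ∧ 1 ≤ ‖q‖ ∧
      (∀ x ∈ (affineSpan ℝ F : Set (EuclideanSpace ℝ (Fin d))), (inner ℝ q (x - q) : ℝ) = 0) ∧
      (∀ x ∈ (affineSpan ℝ F : Set (EuclideanSpace ℝ (Fin d))), ‖q‖ ≤ ‖x‖) := by
  classical
  obtain ⟨hexp, hFne, hdim⟩ := hF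
  obtain ⟨l, hl⟩ := hexp hFne
  have hFP : F ⊆ VoronoiCell C := by rw [hl]; exact fun x hx => hx.1
  have hPconv : Convex ℝ (VoronoiCell C) := voronoi_convex
  have hFconv : Convex ℝ F := by
    rw [hl]
    intro x hx y hy a b ha hb hab
    refine ⟨hPconv hx.1 hy.1 ha hb hab, fun p hp => ?_⟩
    have h1 := hx.2 p hp
    have h2 := hy.2 p hp
    have h3 : l (a • x + b • y) = a * l x + b * l y := by
      rw [map_add, l.map_smul, l.map_smul]; rfl
    have h4 : a * l p + b * l p = l p := by rw [← add_mul, hab, one_mul]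
    rw [h3]
    have h5 := mul_le_mul_of_nonneg_left h1 ha
    have h6 := mul_le_mul_of_nonneg_left h2 hb
    linarith
  -- a relative interior point z
  obtain ⟨z, hz⟩ := Set.Nonempty.intrinsicInterior hFconv hFne
  rw [mem_intrinsicInterior_iff] at hz
  obtain ⟨hzspan, ε₀, hε₀, hball⟩ := hz
  have hzF : z ∈ F := hball z hzspan (by simp [hε₀])
  have hzP : z ∈ VoronoiCell C := hFP hzF
  -- the active constraints at z
  set A : Set (EuclideanSpace ℝ (Fin d)) :=
    {c | c ∈ C ∧ c ≠ 0 ∧ 2 * (inner ℝ z c : ℝ) = ‖c‖ ^ 2} with hAdef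
  have hAC : A ⊆ C := fun c hc => hc.1
  have hA0 : (0 : EuclideanSpace ℝ (Fin d)) ∉ A := fun h => h.2.1 rfl
  -- constraints in A are active on all of the affine span of F
  have hAact : ∀ c ∈ A, ∀ x ∈ (affineSpan ℝ F : Set (EuclideanSpace ℝ (Fin d))),
      2 * (inner ℝ x c : ℝ) = ‖c‖ ^ 2 := by
    intro c hc
    have hAactF : ∀ y ∈ F, 2 * (inner ℝ y c : ℝ) = ‖c‖ ^ 2 := by
      intro y hy
      have hy2 : 2 * (inner ℝ y c : ℝ) ≤ ‖c‖ ^ 2 := mem_voronoi_iff.1 (hFP hy) c hc.1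
      rcases eq_or_ne y z with rfl | hyz
      · exact hc.2.2
      have hzy : (0:ℝ) < ‖z - y‖ := by
        rw [norm_pos_iff, sub_ne_zero]
        exact fun h => hyz h.symm
      set t : ℝ := min (1/2) (ε₀ / (2 * ‖z - y‖)) with ht
      have htpos : 0 < t := lt_min (by norm_num) (by positivity)
      have hxt : z + t • (z - y) ∈ F := by
        apply hball
        · have : z + t • (z - y) = t • (z -ᵥ y) +ᵥ z := by
            simp [vsub_eq_sub, vadd_eq_add]; abel
          rw [this]
          exact AffineSubspace.smul_vsub_vadd_mem _ t hzspan
            (subset_affineSpan ℝ F hy) hzspan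
        · have : dist (z + t • (z - y)) z = t * ‖z - y‖ := by
            rw [dist_eq_norm]
            simp [norm_smul, abs_of_pos htpos]
          rw [this]
          have h1 : t ≤ ε₀ / (2 * ‖z - y‖) := min_le_right _ _
          have h2 : t * ‖z - y‖ ≤ ε₀ / 2 := by
            rw [div_mul_eq_div_div] at h1
            calc t * ‖z - y‖ ≤ (ε₀ / 2 / ‖z - y‖) * ‖z - y‖ :=
              mul_le_mul_of_nonneg_right h1 (le_of_lt hzy)
            _ = ε₀ / 2 := by field_simp
          linarith
      have hxtP := mem_voronoi_iff.1 (hFP hxt) c hc.1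
      have hexpand : (inner ℝ (z + t • (z - y)) c : ℝ)
          = inner ℝ z c + t * (inner ℝ z c - inner ℝ y c) := by
        rw [inner_add_left, real_inner_smul_left, inner_sub_left]
      rw [hexpand] at hxtP
      have hzc := hc.2.2
      nlinarith
    intro x hx
    have hlin : ∀ y ∈ F, ((2:ℝ) • innerSL ℝ c) y = ‖c‖ ^ 2 := by
      intro y hy
      have := hAactF y hy
      simp only [ContinuousLinearMap.smul_apply, innerSL_apply_apply, smul_eq_mul]
      rw [real_inner_comm]
      linarith
    have := const_on_affineSpan ((2:ℝ) • innerSL ℝ c) hlin x hx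
    simp only [ContinuousLinearMap.smul_apply, innerSL_apply_apply, smul_eq_mul] at this
    have hcomm : (inner ℝ x c : ℝ) = inner ℝ c x := real_inner_comm c x
    linarith
  -- l is constant on the affine span
  have hlmax : ∀ p ∈ VoronoiCell C, l p ≤ l z := by
    intro p hp
    have := hl ▸ hzF
    exact this.2 p hp
  have hlspan : ∀ x ∈ (affineSpan ℝ F : Set (EuclideanSpace ℝ (Fin d))), l x = l z :=
    const_on_affineSpan l (fun y hy => le_antisymm (hlmax y (hFP hy))
      ((hl ▸ hy).2 z hzP))
  have hPmemF : ∀ x, x ∈ VoronoiCell C →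
      x ∈ (affineSpan ℝ F : Set (EuclideanSpace ℝ (Fin d))) → x ∈ F := by
    intro x hxP hxspan
    rw [hl]
    refine ⟨hxP, fun p hp => ?_⟩
    rw [hlspan x hxspan]
    exact hlmax p hp
  -- strict slack off A at z
  have hzslack : ∀ c ∈ C, c ∉ A → c ≠ 0 → 2 * (inner ℝ z c : ℝ) < ‖c‖ ^ 2 := by
    intro c hcC hcA hc0
    rcases lt_or_eq_of_le (mem_voronoi_iff.1 hzP c hcC) with h | h
    · exact h
    · exact absurd ⟨hcC, hc0, h⟩ hcA
  -- any vector orthogonal to A lies in the direction of the span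
  have hperpdir : ∀ v : EuclideanSpace ℝ (Fin d),
      (∀ c ∈ A, (inner ℝ c v : ℝ) = 0) → v ∈ (affineSpan ℝ F).direction := by
    intro v hv
    rcases eq_or_ne v 0 with rfl | hv0
    · exact Submodule.zero_mem _
    obtain ⟨ε₁, hε₁, hslack⟩ := slack_lemma hC A z hzslack
    have hvn : (0:ℝ) < ‖v‖ := norm_pos_iff.2 hv0
    set t : ℝ := ε₁ / (2 * ‖v‖) with htdef
    have htpos : 0 < t := by positivity
    have hmemP : ∀ s : ℝ, |s| = t → z + s • v ∈ VoronoiCell C := by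
      intro s hs
      rw [mem_voronoi_iff]
      intro c hcC
      by_cases hcA : c ∈ A
      · have hthis : (inner ℝ (z + s • v) c : ℝ) = inner ℝ z c + s * inner ℝ v c := by
          rw [inner_add_left, real_inner_smul_left]
        have hvc : (inner ℝ v c : ℝ) = 0 := by
          have hcomm : (inner ℝ v c : ℝ) = inner ℝ c v := real_inner_comm c v
          rw [hcomm]; exact hv c hcA
        have heq := hcA.2.2
        rw [hthis, hvc]
        linarith
      · apply hslack
        · rw [dist_eq_norm]
          have h1 : ‖z + s • v - z‖ = |s| * ‖v‖ := by
            simp [norm_smul]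
          have h2 : (ε₁ / (2 * ‖v‖)) * ‖v‖ = ε₁ / 2 := by
            field_simp
          rw [h1, hs, htdef, h2]
          linarith
        · exact hcC
        · exact hcA
    have hplus : z + t • v ∈ VoronoiCell C := hmemP t (abs_of_pos htpos)
    have hminus : z + (-t) • v ∈ VoronoiCell C := hmemP (-t) (by rw [abs_neg, abs_of_pos htpos])
    have hlp := hlmax _ hplus
    have hlm := hlmax _ hminus
    have hsum : l (z + t • v) + l (z + (-t) • v) = 2 * l z := by
      rw [map_add, map_add, l.map_smul, l.map_smul]
      simp only [smul_eq_mul]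
      ring
    have hlp' : l (z + t • v) = l z := by linarith
    have hFplus : z + t • v ∈ F := by
      rw [hl]
      refine ⟨hplus, fun p hp => ?_⟩
      rw [hlp']
      exact hlmax p hp
    have : (z + t • v) - z ∈ (affineSpan ℝ F).direction :=
      AffineSubspace.vsub_mem_direction (subset_affineSpan ℝ F hFplus) hzspan
    have htv : t • v ∈ (affineSpan ℝ F).direction := by
      simpa using this
    have := Submodule.smul_mem (affineSpan ℝ F).direction t⁻¹ htv
    rwa [smul_smul, inv_mul_cancel₀ (ne_of_gt htpos), one_smul] at this
  -- A is nonempty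
  have hAne : A.Nonempty := by
    by_contra h
    rw [Set.not_nonempty_iff_eq_empty] at h
    have : ∀ v : EuclideanSpace ℝ (Fin d), v ∈ (affineSpan ℝ F).direction := by
      intro v
      apply hperpdir
      rw [h]
      simp
    have htop : (affineSpan ℝ F).direction = ⊤ := by
      rw [Submodule.eq_top_iff']
      exact this
    rw [htop, finrank_top, finrank_euclideanSpace_fin] at hdim
    omega
  -- the orthogonal complement of the direction is contained in span A
  have hdirorth : ((affineSpan ℝ F).direction)ᗮ ≤ Submodule.span ℝ A := by
    have h1 : (Submodule.span ℝ A)ᗮ ≤ (affineSpan ℝ F).direction := by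
      intro v hv
      apply hperpdir
      intro c hc
      exact (Submodule.mem_orthogonal _ v).1 hv c (Submodule.subset_span hc)
    calc ((affineSpan ℝ F).direction)ᗮ ≤ ((Submodule.span ℝ A)ᗮ)ᗮ :=
      Submodule.orthogonal_le h1
    _ = Submodule.span ℝ A := Submodule.orthogonal_orthogonal _
  -- the orthogonal projection q of the origin
  haveI : Nonempty (affineSpan ℝ F) := ⟨⟨z, hzspan⟩⟩
  set q : EuclideanSpace ℝ (Fin d) :=
    ↑(EuclideanGeometry.orthogonalProjection (affineSpan ℝ F) 0) with hqdef
  have hqmem : q ∈ (affineSpan ℝ F : Set (EuclideanSpace ℝ (Fin d))) :=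
    EuclideanGeometry.orthogonalProjection_mem 0
  have hqperp : -q ∈ ((affineSpan ℝ F).direction)ᗮ := by
    have := EuclideanGeometry.vsub_orthogonalProjection_mem_direction_orthogonal
      (affineSpan ℝ F) 0
    simpa [vsub_eq_sub] using this
  have horth : ∀ x ∈ (affineSpan ℝ F : Set (EuclideanSpace ℝ (Fin d))),
      (inner ℝ q (x - q) : ℝ) = 0 := by
    intro x hx
    have hxd : x - q ∈ (affineSpan ℝ F).direction := by
      have := AffineSubspace.vsub_mem_direction hx hqmem
      simpa [vsub_eq_sub] using this
    have := (Submodule.mem_orthogonal _ (-q)).1 hqperp (x - q) hxd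
    have h2 : (inner ℝ (x - q) q : ℝ) = 0 := by
      have h3 : (inner ℝ (x - q) (-q) : ℝ) = -(inner ℝ (x - q) q : ℝ) := inner_neg_right _ _
      rw [h3] at this
      linarith
    rw [real_inner_comm]
    exact h2
  have hpyth : ∀ x ∈ (affineSpan ℝ F : Set (EuclideanSpace ℝ (Fin d))),
      ‖x‖ ^ 2 = ‖q‖ ^ 2 + ‖x - q‖ ^ 2 := by
    intro x hx
    have h1 := norm_add_sq_real q (x - q)
    rw [horth x hx] at h1
    have h2 : q + (x - q) = x := by abel
    rw [h2] at h1
    linarith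
  have hqmin : ∀ x ∈ (affineSpan ℝ F : Set (EuclideanSpace ℝ (Fin d))),
      ‖q‖ ≤ ‖x‖ := by
    intro x hx
    have := hpyth x hx
    nlinarith [norm_nonneg x, norm_nonneg q, sq_nonneg ‖x - q‖]
  -- ‖q‖ < √2
  have hqlt : ‖q‖ < Real.sqrt 2 := by
    have hne : (affineSpan ℝ F : Set (EuclideanSpace ℝ (Fin d))).Nonempty := ⟨z, hzspan⟩
    rw [faceDist, Metric.infDist_lt_iff hne] at hrho
    obtain ⟨y, hy, hdy⟩ := hrho
    rw [dist_comm, dist_zero_right] at hdy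
    exact lt_of_le_of_lt (hqmin y hy) hdy
  have hq2 : ‖q‖ ^ 2 < 2 := by
    have h2 : Real.sqrt 2 ^ 2 = 2 := Real.sq_sqrt (by norm_num)
    nlinarith [norm_nonneg q, Real.sqrt_nonneg 2]
  -- q is active on A, and equidistant from 0 and the points of A
  have hqact : ∀ c ∈ A, 2 * (inner ℝ q c : ℝ) = ‖c‖ ^ 2 := fun c hc => hAact c hc q hqmem
  have hqdist : ∀ s : EuclideanSpace ℝ (Fin d), s = 0 ∨ s ∈ A → ‖s - q‖ ^ 2 = ‖q‖ ^ 2 := by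
    intro s hs
    rcases hs with rfl | hs
    · simp
    · have h1 := norm_sub_sq_real s q
      have h2 : 2 * (inner ℝ s q : ℝ) = ‖s‖ ^ 2 := by
        rw [real_inner_comm]; exact hqact s hs
      linarith
  -- q is in the span of A
  have hqspanA : q ∈ Submodule.span ℝ A := by
    have : -q ∈ Submodule.span ℝ A := hdirorth hqperp
    simpa using Submodule.neg_mem _ this
  -- strict slack off A at q
  have hstrict : ∀ c' ∈ C, c' ∉ A → c' ≠ 0 → 2 * (inner ℝ q c' : ℝ) < ‖c'‖ ^ 2 := by
    intro c' hc'C hc'A hc'0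
    by_contra hcon
    push_neg at hcon
    -- build the affine relation
    rw [Submodule.mem_span_set] at hqspanA
    obtain ⟨w₀, hw₀supp, hw₀sum⟩ := hqspanA
    have h0supp : (0 : EuclideanSpace ℝ (Fin d)) ∉ w₀.support := fun h => hA0 (hw₀supp h)
    set S : Finset (EuclideanSpace ℝ (Fin d)) := insert 0 w₀.support with hSdef
    set w : EuclideanSpace ℝ (Fin d) → ℝ :=
      fun s => if s = 0 then 1 - ∑ c ∈ w₀.support, w₀ c else w₀ s with hwdef
    have hSsub : ∀ s ∈ S, s = 0 ∨ s ∈ A := by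
      intro s hs
      rcases Finset.mem_insert.1 hs with h | h
      · exact Or.inl h
      · exact Or.inr (hw₀supp h)
    have hwsum : ∑ s ∈ S, w s = 1 := by
      rw [hSdef, Finset.sum_insert h0supp]
      have : ∑ s ∈ w₀.support, w s = ∑ s ∈ w₀.support, w₀ s := by
        apply Finset.sum_congr rfl
        intro s hs
        rw [hwdef]
        simp only
        rw [if_neg (show ¬ s = 0 by rintro rfl; exact h0supp hs)]
      rw [this]
      simp [hwdef]
    have hvsum : ∑ s ∈ S, w s • s = q := by
      rw [hSdef, Finset.sum_insert h0supp]
      have : ∑ s ∈ w₀.support, w s • s = ∑ s ∈ w₀.support, w₀ s • s := by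
        apply Finset.sum_congr rfl
        intro s hs
        rw [hwdef]
        simp only
        rw [if_neg (show ¬ s = 0 by rintro rfl; exact h0supp hs)]
      rw [this, smul_zero, zero_add]
      exact hw₀sum
    have hc'dist : ‖c' - q‖ ^ 2 ≤ ‖q‖ ^ 2 := by
      have h1 := norm_sub_sq_real c' q
      have h2 : (inner ℝ c' q : ℝ) = inner ℝ q c' := real_inner_comm _ _
      nlinarith
    have hfar : ∀ s, s = 0 ∨ s ∈ A → 2 ≤ ‖c' - s‖ := by
      intro s hs
      rcases hs with rfl | hs
      · rw [sub_zero]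
        exact packing_norm_ge hC hc'C hc'0
      · refine hC.2 c' hc'C s hs.1 ?_
        rintro rfl
        exact hc'A hs
    refine sep_lemma S w (fun s => s - q) (q - c') hwsum ?_ ?_ ?_
    · have : ∑ s ∈ S, w s • (s - q) = (∑ s ∈ S, w s • s) - (∑ s ∈ S, w s) • q := by
        rw [Finset.sum_smul, ← Finset.sum_sub_distrib]
        apply Finset.sum_congr rfl
        intro s _
        rw [smul_sub]
      rw [this, hvsum, hwsum, one_smul, sub_self]
    · intro s hs
      have hsq := hqdist s (hSsub s hs)
      have hfs := hfar s (hSsub s hs)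
      have hkey := norm_sub_sq_real (c' - q) (s - q)
      rw [sub_sub_sub_cancel_right] at hkey
      have hfs2 : 4 ≤ ‖c' - s‖ ^ 2 := by nlinarith [norm_nonneg (c' - s)]
      have hneg : (inner ℝ (c' - q) (s - q) : ℝ) < 0 := by nlinarith
      have : (inner ℝ (q - c') (s - q) : ℝ) = -(inner ℝ (c' - q) (s - q) : ℝ) := by
        rw [← neg_sub c' q, inner_neg_left]
      rw [this]
      linarith
    · intro s hs t ht hst
      have hsq := hqdist s (hSsub s hs)
      have htq := hqdist t (hSsub t ht)
      have hstdist : 2 ≤ ‖s - t‖ := by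
        rcases hSsub s hs with rfl | hsA
        · rcases hSsub t ht with rfl | htA
          · exact absurd rfl hst
          · have := packing_norm_ge hC htA.1 htA.2.1
            rw [zero_sub, norm_neg]
            exact this
        · rcases hSsub t ht with rfl | htA
          · rw [sub_zero]
            exact packing_norm_ge hC hsA.1 hsA.2.1
          · exact hC.2 s hsA.1 t htA.1 hst
      have hkey := norm_sub_sq_real (s - q) (t - q)
      rw [sub_sub_sub_cancel_right] at hkey
      have hst2 : 4 ≤ ‖s - t‖ ^ 2 := by nlinarith [norm_nonneg (s - t)]
      nlinarith
  -- q belongs to the Voronoi cell, hence to F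
  have hqP : q ∈ VoronoiCell C := by
    rw [mem_voronoi_iff]
    intro c hcC
    by_cases hc0 : c = 0
    · subst hc0; simp
    by_cases hcA : c ∈ A
    · exact le_of_eq (hqact c hcA)
    · exact le_of_lt (hstrict c hcC hcA hc0)
  have hqF : q ∈ F := hPmemF q hqP hqmem
  -- 1 ≤ ‖q‖
  have hq1 : 1 ≤ ‖q‖ := by
    obtain ⟨c₀, hc₀⟩ := hAne
    have h1 := hqact c₀ hc₀
    have h2 : (inner ℝ q c₀ : ℝ) ≤ ‖q‖ * ‖c₀‖ := real_inner_le_norm _ _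
    have h3 : 2 ≤ ‖c₀‖ := packing_norm_ge hC hc₀.1 hc₀.2.1
    nlinarith [norm_nonneg q]
  -- q is in the intrinsic interior of F
  have hqint : q ∈ intrinsicInterior ℝ F := by
    obtain ⟨ε₂, hε₂, hslk⟩ := slack_lemma hC A q hstrict
    rw [mem_intrinsicInterior_iff]
    refine ⟨hqmem, ε₂, hε₂, fun y hy hdy => ?_⟩
    apply hPmemF y ?_ hy
    rw [mem_voronoi_iff]
    intro c hcC
    by_cases hcA : c ∈ A
    · exact le_of_eq (hAact c hcA y hy)
    · exact hslk y hdy c hcC hcA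
  exact ⟨q, hqint, hq1, horth, hqmin⟩

end RSO

set_option maxHeartbeats 1600000 in
/-- **Lemma 3 (Bezdek).** Let `F (d-i) ⊂ ⋯ ⊂ F (d-1)` be a subflag of faces of a bounded
Voronoi cell `P` in a unit ball packing of `ℝ^d` (here `F j` has dimension `d - j` for
`1 ≤ j ≤ i`, indexed by codimension) with `R(F_{d-i}) < √2`, and for `1 ≤ j ≤ i` let
`r j` be the point of the face of dimension `d - j` nearest to `o` (with `r 0 = o = 0`).
Then `r 1, …, r i` are linearly independent, `conv {o, r 1, …, r i}` is an `i`-dimensional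
orthoscheme, and each `r j` lies in the relative interior of its face and is the orthogonal
projection of `o` onto the affine hull of that face. -/
theorem rogers_simplex_is_orthoscheme (d i : ℕ) (hi : 1 ≤ i) (hid : i ≤ d)
    (C : Set (EuclideanSpace ℝ (Fin d))) (hC : IsUnitBallPacking C)
    (hBdd : Bornology.IsBounded (VoronoiCell C))
    (F : ℕ → Set (EuclideanSpace ℝ (Fin d)))
    (hface : ∀ j, 1 ≤ j → j ≤ i → IsFaceDim (VoronoiCell C) (F j) (d - j))
    (hnest : ∀ j, 1 ≤ j → j < i → F (j + 1) ⊆ F j)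
    (hR : faceDist (F i) < Real.sqrt 2)
    (r : ℕ → EuclideanSpace ℝ (Fin d)) (hr0 : r 0 = 0)
    (hr : ∀ j, 1 ≤ j → j ≤ i → r j ∈ F j ∧ ∀ z ∈ F j, ‖r j‖ ≤ ‖z‖) :
    LinearIndependent ℝ (fun j : Fin i => r ((j : ℕ) + 1)) ∧
      (∀ j k : ℕ, j < k → k ≤ i → (inner ℝ (r j) (r k - r j) : ℝ) = 0) ∧
      ∀ j, 1 ≤ j → j ≤ i →
        r j ∈ intrinsicInterior ℝ (F j) ∧
          ∀ q ∈ (affineSpan ℝ (F j) : Set (EuclideanSpace ℝ (Fin d))),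
            dist (0 : EuclideanSpace ℝ (Fin d)) (r j) ≤ dist 0 q := by

  classical
  -- the chain of inclusions
  have hchain : ∀ j k, 1 ≤ j → j ≤ k → k ≤ i → F k ⊆ F j := by
    intro j k hj hjk
    induction k, hjk using Nat.le_induction with
    | base => intro _; exact subset_rfl
    | succ n hn ih =>
      intro hni
      exact (hnest n (le_trans hj hn) (by omega)).trans (ih (by omega))
  -- the main data for each face
  have hmain : ∀ j, 1 ≤ j → j ≤ i → r j ∈ intrinsicInterior ℝ (F j) ∧
      (∀ x ∈ (affineSpan ℝ (F j) : Set (EuclideanSpace ℝ (Fin d))),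
        (inner ℝ (r j) (x - r j) : ℝ) = 0) ∧
      (∀ x ∈ (affineSpan ℝ (F j) : Set (EuclideanSpace ℝ (Fin d))), ‖r j‖ ≤ ‖x‖) ∧
      1 ≤ ‖r j‖ := by
    intro j hj hji
    have hkd : d - j < d := by omega
    have hfd : faceDist (F j) < Real.sqrt 2 := by
      have hFij : F i ⊆ F j := hchain j i hj hji le_rfl
      have hsub : (affineSpan ℝ (F i) : Set (EuclideanSpace ℝ (Fin d))) ⊆
          (affineSpan ℝ (F j) : Set (EuclideanSpace ℝ (Fin d))) :=
        fun x hx => (affineSpan_mono ℝ hFij) hx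
      have hnei : (affineSpan ℝ (F i) : Set (EuclideanSpace ℝ (Fin d))).Nonempty :=
        (affineSpan_nonempty ℝ).2 (hface i hi le_rfl).2.1
      calc faceDist (F j) ≤ faceDist (F i) :=
        Metric.infDist_le_infDist_of_subset hsub hnei
      _ < Real.sqrt 2 := hR
    obtain ⟨q, hqint, hq1, hqorth, hqmin⟩ := RSO.main_face_lemma hC (hface j hj hji) hkd hfd
    have hqF : q ∈ F j := intrinsicInterior_subset hqint
    have hrF := (hr j hj hji).1
    have hrmin := (hr j hj hji).2
    have hrq : r j = q := by
      have h1 : ‖r j‖ ≤ ‖q‖ := hrmin q hqF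
      have hrspan : r j ∈ (affineSpan ℝ (F j) : Set (EuclideanSpace ℝ (Fin d))) :=
        subset_affineSpan ℝ _ hrF
      have h2 := hqorth (r j) hrspan
      have h3 := norm_add_sq_real q (r j - q)
      rw [h2] at h3
      have h4 : q + (r j - q) = r j := by abel
      rw [h4] at h3
      have h5 : ‖r j - q‖ ^ 2 ≤ 0 := by nlinarith [norm_nonneg (r j), norm_nonneg q]
      have h6 : ‖r j - q‖ ^ 2 = 0 := le_antisymm h5 (sq_nonneg _)
      have h7 : ‖r j - q‖ = 0 := by
        have := sq_eq_zero_iff.1 h6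
        exact this
      rw [norm_eq_zero, sub_eq_zero] at h7
      exact h7
    rw [hrq]
    exact ⟨hqint, hqorth, hqmin, hq1⟩
  -- part 2 : orthogonality
  have hpart2 : ∀ j k : ℕ, j < k → k ≤ i → (inner ℝ (r j) (r k - r j) : ℝ) = 0 := by
    intro j k hjk hki
    rcases Nat.eq_zero_or_pos j with rfl | hj
    · rw [hr0]; exact inner_zero_left _
    · have hrkFj : r k ∈ F j := hchain j k hj (le_of_lt hjk) hki (hr k (by omega) hki).1
      exact (hmain j hj (by omega)).2.1 (r k) (subset_affineSpan ℝ _ hrkFj)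
  -- inner products
  have hIP : ∀ a b : ℕ, a ≤ b → b ≤ i → (inner ℝ (r a) (r b) : ℝ) = ‖r a‖ ^ 2 := by
    intro a b hab hbi
    rcases lt_or_eq_of_le hab with h | h
    · have := hpart2 a b h hbi
      rw [inner_sub_right] at this
      have hself : (inner ℝ (r a) (r a) : ℝ) = ‖r a‖ ^ 2 := real_inner_self_eq_norm_sq _
      linarith
    · rw [h]
      exact real_inner_self_eq_norm_sq _
  -- strict monotonicity of the norms
  have hsn : ∀ j k, 1 ≤ j → j < k → k ≤ i → ‖r j‖ < ‖r k‖ := by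
    intro j k hj hjk hki
    have hji : j ≤ i := by omega
    have hrkFj : r j ∈ F j := (hr j hj hji).1
    have hrkFk : r k ∈ F k := (hr k (by omega) hki).1
    have hFkj : F k ⊆ F j := hchain j k hj (le_of_lt hjk) hki
    have hle : ‖r j‖ ≤ ‖r k‖ := (hr j hj hji).2 (r k) (hFkj hrkFk)
    rcases lt_or_eq_of_le hle with h | h
    · exact h
    exfalso
    have hmj := hmain j hj hji
    have hrkspan : r k ∈ (affineSpan ℝ (F j) : Set (EuclideanSpace ℝ (Fin d))) :=
      subset_affineSpan ℝ _ (hFkj hrkFk)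
    have horthjk := hmj.2.1 (r k) hrkspan
    have h3 := norm_add_sq_real (r j) (r k - r j)
    rw [horthjk] at h3
    have h4 : r j + (r k - r j) = r k := by abel
    rw [h4] at h3
    have h5 : ‖r k - r j‖ ^ 2 = 0 := by nlinarith
    have heq : r k = r j := by
      have h7 : ‖r k - r j‖ = 0 := sq_eq_zero_iff.1 h5
      rwa [norm_eq_zero, sub_eq_zero] at h7
    have hrjFk : r j ∈ F k := heq ▸ hrkFk
    obtain ⟨hexpk, hFkne, hdimk⟩ := hface k (by omega) hki
    obtain ⟨lk, hlk⟩ := hexpk hFkne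
    have hFjP : F j ⊆ VoronoiCell C := (hface j hj hji).1.subset
    have hmaxk : ∀ p ∈ VoronoiCell C, lk p ≤ lk (r j) := (hlk ▸ hrjFk).2
    have hint := hmj.1
    rw [RSO.mem_intrinsicInterior_iff] at hint
    obtain ⟨hspan, ε, hε, hball⟩ := hint
    have hFsub : F j ⊆ F k := by
      intro y hy
      have hyP : y ∈ VoronoiCell C := hFjP hy
      have hky : lk y ≤ lk (r j) := hmaxk y hyP
      rcases eq_or_ne y (r j) with rfl | hne
      · exact hrjFk
      have hzy : (0:ℝ) < ‖r j - y‖ := by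
        rw [norm_pos_iff, sub_ne_zero]
        exact fun hcc => hne hcc.symm
      set t : ℝ := min (1/2) (ε / (2 * ‖r j - y‖)) with ht
      have htpos : 0 < t := lt_min (by norm_num) (by positivity)
      have hxt : r j + t • (r j - y) ∈ F j := by
        apply hball
        · have : r j + t • (r j - y) = t • (r j -ᵥ y) +ᵥ r j := by
            simp [vsub_eq_sub, vadd_eq_add]; abel
          rw [this]
          exact AffineSubspace.smul_vsub_vadd_mem _ t hspan
            (subset_affineSpan ℝ _ hy) hspan
        · have hd : dist (r j + t • (r j - y)) (r j) = t * ‖r j - y‖ := by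
            rw [dist_eq_norm]
            simp [norm_smul, abs_of_pos htpos]
          rw [hd]
          have h1 : t ≤ ε / (2 * ‖r j - y‖) := min_le_right _ _
          have h2 : t * ‖r j - y‖ ≤ ε / 2 := by
            rw [div_mul_eq_div_div] at h1
            calc t * ‖r j - y‖ ≤ (ε / 2 / ‖r j - y‖) * ‖r j - y‖ :=
              mul_le_mul_of_nonneg_right h1 (le_of_lt hzy)
            _ = ε / 2 := by field_simp
          linarith
      have hxtP : r j + t • (r j - y) ∈ VoronoiCell C := hFjP hxt
      have h7 := hmaxk _ hxtP
      have h8 : lk (r j + t • (r j - y)) = lk (r j) + t * (lk (r j) - lk y) := by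
        rw [map_add, lk.map_smul, map_sub]
        simp only [smul_eq_mul]
        try ring
      rw [h8] at h7
      have h9 : lk (r j) ≤ lk y := by nlinarith
      rw [hlk]
      exact ⟨hyP, fun p hp => le_trans (hmaxk p hp) h9⟩
    have hspaneq : affineSpan ℝ (F j) = affineSpan ℝ (F k) :=
      le_antisymm (affineSpan_mono ℝ hFsub) (affineSpan_mono ℝ hFkj)
    have hdimj := (hface j hj hji).2.2
    rw [hspaneq, hdimk] at hdimj
    omega
  -- part 3
  have hpart3 : ∀ j, 1 ≤ j → j ≤ i →
      r j ∈ intrinsicInterior ℝ (F j) ∧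
        ∀ q ∈ (affineSpan ℝ (F j) : Set (EuclideanSpace ℝ (Fin d))),
          dist (0 : EuclideanSpace ℝ (Fin d)) (r j) ≤ dist 0 q := by
    intro j hj hji
    refine ⟨(hmain j hj hji).1, fun q hq => ?_⟩
    simp only [dist_zero_left]
    exact (hmain j hj hji).2.2.1 q hq
  -- part 1 : linear independence
  refine ⟨?_, hpart2, hpart3⟩
  rw [Fintype.linearIndependent_iff]
  intro g hg
  have hT : ∀ m : ℕ, m < i →
      ∑ j ∈ Finset.univ.filter (fun j : Fin i => m ≤ (j : ℕ)), g j = 0 := by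
    intro m hm
    have hδ : 0 < ‖r (m+1)‖ ^ 2 - ‖r m‖ ^ 2 := by
      rcases Nat.eq_zero_or_pos m with rfl | hm1
      · have h1 := (hmain 1 le_rfl (by omega)).2.2.2
        rw [hr0, norm_zero]
        have h2 : r (0+1) = r 1 := by norm_num
        rw [h2]
        nlinarith
      · have h1 := hsn m (m+1) hm1 (by omega) (by omega)
        have h2 := (hmain m hm1 (by omega)).2.2.2
        nlinarith
    have hinner : ∀ j : Fin i, (inner ℝ (r ((j:ℕ)+1)) (r (m+1) - r m) : ℝ) =
        (if m ≤ (j:ℕ) then ‖r (m+1)‖ ^ 2 - ‖r m‖ ^ 2 else 0) := by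
      intro j
      have hji : (j:ℕ) + 1 ≤ i := j.2
      rw [inner_sub_right]
      by_cases hmj : m ≤ (j:ℕ)
      · rw [if_pos hmj]
        have ha : (inner ℝ (r ((j:ℕ)+1)) (r (m+1)) : ℝ) = ‖r (m+1)‖ ^ 2 := by
          rw [real_inner_comm]
          exact hIP (m+1) ((j:ℕ)+1) (by omega) hji
        have hb : (inner ℝ (r ((j:ℕ)+1)) (r m) : ℝ) = ‖r m‖ ^ 2 := by
          rw [real_inner_comm]
          exact hIP m ((j:ℕ)+1) (by omega) hji
        rw [ha, hb]
      · rw [if_neg hmj]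
        have ha : (inner ℝ (r ((j:ℕ)+1)) (r (m+1)) : ℝ) = ‖r ((j:ℕ)+1)‖ ^ 2 :=
          hIP ((j:ℕ)+1) (m+1) (by omega) (by omega)
        have hb : (inner ℝ (r ((j:ℕ)+1)) (r m) : ℝ) = ‖r ((j:ℕ)+1)‖ ^ 2 :=
          hIP ((j:ℕ)+1) m (by omega) (by omega)
        rw [ha, hb]
        ring
    have h0 := congrArg (fun x => (inner ℝ x (r (m+1) - r m) : ℝ)) hg
    simp only [inner_zero_left] at h0
    rw [sum_inner] at h0
    have hstep : ∀ j : Fin i, (inner ℝ (g j • r ((j:ℕ)+1)) (r (m+1) - r m) : ℝ) =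
        (if m ≤ (j:ℕ) then g j * (‖r (m+1)‖ ^ 2 - ‖r m‖ ^ 2) else 0) := by
      intro j
      rw [real_inner_smul_left, hinner j]
      by_cases hmj : m ≤ (j:ℕ)
      · rw [if_pos hmj, if_pos hmj]
      · rw [if_neg hmj, if_neg hmj, mul_zero]
    have h1 : ∑ j : Fin i, (if m ≤ (j:ℕ) then g j * (‖r (m+1)‖ ^ 2 - ‖r m‖ ^ 2) else 0)
        = 0 := by
      calc ∑ j : Fin i, (if m ≤ (j:ℕ) then g j * (‖r (m+1)‖ ^ 2 - ‖r m‖ ^ 2) else 0)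
          = ∑ j : Fin i, (inner ℝ (g j • r ((j:ℕ)+1)) (r (m+1) - r m) : ℝ) :=
        Finset.sum_congr rfl fun j _ => (hstep j).symm
      _ = 0 := h0
    rw [← Finset.sum_filter] at h1
    rw [← Finset.sum_mul] at h1
    rcases mul_eq_zero.1 h1 with h | h
    · exact h
    · linarith
  intro j
  have h1 := hT (j:ℕ) j.2
  have h2 : ∑ jj ∈ Finset.univ.filter (fun jj : Fin i => (j:ℕ)+1 ≤ (jj:ℕ)), g jj = 0 := by
    by_cases hj1 : (j:ℕ)+1 < i
    · exact hT _ hj1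
    · have : Finset.univ.filter (fun jj : Fin i => (j:ℕ)+1 ≤ (jj:ℕ)) = ∅ := by
        rw [Finset.filter_eq_empty_iff]
        intro jj _
        have := jj.2
        omega
      rw [this, Finset.sum_empty]
  have hsplit : Finset.univ.filter (fun jj : Fin i => (j:ℕ) ≤ (jj:ℕ)) =
      insert j (Finset.univ.filter (fun jj : Fin i => (j:ℕ)+1 ≤ (jj:ℕ))) := by
    ext jj
    simp only [Finset.mem_filter, Finset.mem_univ, true_and, Finset.mem_insert, Fin.ext_iff]
    omega
  rw [hsplit, Finset.sum_insert (by
    simp only [Finset.mem_filter, Finset.mem_univ, true_and]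
    omega)] at h1
  have : ∑ jj ∈ Finset.univ.filter (fun jj : Fin i => (j:ℕ)+1 ≤ (jj:ℕ)), g jj
      = 0 := h2
  linarith
end
end
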